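/- Let X be a smooth projective curve of genus g over F_q with canonical divisor W. Let A, B, Z, D', E be divisors such that Z, D', and E are effective, the supports of A, B, and Z are disjoint from the support of D', W = A + B + E − D', ℓ(A) = ℓ(A − Z), and ℓ(B) = ℓ(B + Z). Then deg(E) ≥ deg(Z). -/
import Mathlib


/-!  Framework: an abstract smooth projective curve over a finite field `Fq`,
presented through the data relevant to geometric Goppa codes: points, function
field with valuations, Riemann–Roch spaces, genus, rational differentials with
their divisors and residues, floors of divisors, and the Riemann–Roch theorem.
Divisors are finitely supported `ℤ`-valued functions on points. -/

/-- The degree of a divisor. -/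
def divDeg {σ : Type*} (D : σ →₀ ℤ) : ℤ := D.sum fun _ n => n

/-- An abstract smooth projective curve over the field `Fq`. -/
structure Curve (Fq : Type*) [Field Fq] where
  /-- the (closed, rational) points of the curve -/
  Point : Type
  /-- the function field -/
  K : Type
  [fieldK : Field K]
  [algebraK : Algebra Fq K]
  /-- the genus -/
  genus : ℕ
  /-- the valuation of a rational function at a point -/
  v : Point → K → ℤ
  v_mul : ∀ (P : Point) (f g : K), f ≠ 0 → g ≠ 0 → v P (f * g) = v P f + v P g
  /-- the Riemann–Roch space `L(A)` of a divisor `A` -/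
  L : (Point →₀ ℤ) → Submodule Fq K
  mem_L : ∀ (A : Point →₀ ℤ) (f : K), f ∈ L A ↔ f = 0 ∨ ∀ P : Point, 0 ≤ A P + v P f
  L_mono : ∀ {A B : Point →₀ ℤ}, A ≤ B → L A ≤ L B
  /-- the floor `⌊A⌋` of a divisor `A` with `ℓ(A) > 0`: the unique divisor of minimal
  degree with the same Riemann–Roch space -/
  floor : (Point →₀ ℤ) → (Point →₀ ℤ)
  floor_le : ∀ A : Point →₀ ℤ, 0 < Module.finrank Fq (L A) → floor A ≤ A
  L_floor : ∀ A : Point →₀ ℤ, 0 < Module.finrank Fq (L A) → L (floor A) = L A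
  floor_min : ∀ A B : Point →₀ ℤ, 0 < Module.finrank Fq (L A) → L B = L A →
      divDeg (floor A) ≤ divDeg B
  /-- the rational differentials of the curve -/
  Diff : Type
  [addCommGroupDiff : AddCommGroup Diff]
  /-- the divisor of a (nonzero) rational differential; canonical divisors are
  exactly the divisors of nonzero differentials -/
  divDiff : Diff → (Point →₀ ℤ)
  /-- the residue of a rational differential at a point -/
  res : Point → Diff → Fq
  exists_diff_ne_zero : ∃ η : Diff, η ≠ 0
  /-- a canonical divisor has degree `2g - 2` -/
  deg_divDiff : ∀ η : Diff, η ≠ 0 → divDeg (divDiff η) = 2 * (genus : ℤ) - 2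
  /-- the Riemann–Roch theorem -/
  riemannRoch : ∀ η : Diff, η ≠ 0 → ∀ A : Point →₀ ℤ,
      (Module.finrank Fq (L A) : ℤ)
        = divDeg A + 1 - (genus : ℤ) + (Module.finrank Fq (L (divDiff η - A)) : ℤ)

attribute [instance] Curve.fieldK Curve.algebraK Curve.addCommGroupDiff

namespace Curve

variable {Fq : Type*} [Field Fq] (C : Curve Fq)

/-- `ℓ(A)`, the dimension over `Fq` of the Riemann–Roch space `L(A)`. -/
noncomputable def ell (A : C.Point →₀ ℤ) : ℕ := Module.finrank Fq (C.L A)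

/-- The space `Ω(A)` of rational differentials with `(η) ≥ A`, together with `0`. -/
def Omega (A : C.Point →₀ ℤ) : Set C.Diff := {η | η = 0 ∨ A ≤ C.divDiff η}

/-- The divisor `P 0 + ⋯ + P (n-1)` attached to a tuple of points. -/
noncomputable def divOfPoints {n : ℕ} (P : Fin n → C.Point) : C.Point →₀ ℤ :=
  ∑ i, Finsupp.single (P i) 1

/-- The residue Goppa code `C_Ω(D, G)`, where `D = P 0 + ⋯ + P (n-1)`. -/
def code {n : ℕ} (P : Fin n → C.Point) (G : C.Point →₀ ℤ) : Set (Fin n → Fq) :=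
  {c | ∃ η ∈ C.Omega (G - C.divOfPoints P), ∀ i, c i = C.res (P i) η}

/-- `a` is an `A`-gap at the point `P`, i.e. `L(A + aP) = L(A + (a-1)P)`. -/
def IsGap (A : C.Point →₀ ℤ) (P : C.Point) (a : ℤ) : Prop :=
  C.L (A + Finsupp.single P a) = C.L (A + Finsupp.single P (a - 1))

end Curve

/-- The Hamming weight of a word. -/
noncomputable def wt {Fq : Type*} [Zero Fq] {n : ℕ} (c : Fin n → Fq) : ℕ :=
  Nat.card {i // c i ≠ 0}

/-- The minimum distance (minimum weight of a nonzero codeword) of a code. -/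
noncomputable def minDist {Fq : Type*} [Zero Fq] {n : ℕ} (S : Set (Fin n → Fq)) : ℕ :=
  sInf {w | ∃ c ∈ S, c ≠ 0 ∧ wt c = w}


/-! ### Auxiliary lemmas -/

lemma divDeg_add {σ : Type*} (D E : σ →₀ ℤ) :
    divDeg (D + E) = divDeg D + divDeg E :=
  Finsupp.sum_add_index' (fun _ => rfl) (fun _ _ _ => rfl)

lemma divDeg_sub {σ : Type*} (D E : σ →₀ ℤ) :
    divDeg (D - E) = divDeg D - divDeg E :=
  Finsupp.sum_sub_index (fun _ _ _ => rfl)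

lemma divDeg_single {σ : Type*} (P : σ) (n : ℤ) :
    divDeg (Finsupp.single P n) = n :=
  Finsupp.sum_single_index rfl

namespace Curve

variable {Fq : Type*} [Field Fq] (C : Curve Fq)

/-- Every Riemann–Roch space is finite dimensional (when the curve has a point):
otherwise its finrank, and that of every larger space, would be `0`, contradicting
Riemann–Roch for divisors of large degree. -/
lemma findim [Nonempty C.Point] (A : C.Point →₀ ℤ) :
    FiniteDimensional Fq (C.L A) := by
  by_contra h
  obtain ⟨η, hη⟩ := C.exists_diff_ne_zero
  obtain ⟨P⟩ := (inferInstance : Nonempty C.Point)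
  set m : ℤ := (((C.genus : ℤ) + 1 - divDeg A).toNat : ℤ) with hm
  have hm0 : 0 ≤ m := Int.ofNat_nonneg _
  have hmge : (C.genus : ℤ) + 1 - divDeg A ≤ m := Int.self_le_toNat _
  set A' : C.Point →₀ ℤ := A + Finsupp.single P m with hA'
  have hAA' : A ≤ A' := le_add_of_nonneg_right (Finsupp.single_nonneg.2 hm0)
  have h' : ¬ FiniteDimensional Fq (C.L A') := fun hfin =>
    h (Submodule.finiteDimensional_of_le (C.L_mono hAA'))
  have h0 : Module.finrank Fq (C.L A') = 0 :=
    Module.finrank_of_infinite_dimensional h'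
  have hrr := C.riemannRoch η hη A'
  rw [h0] at hrr
  have hdeg : divDeg A' = divDeg A + m := by
    rw [hA', divDeg_add, divDeg_single]
  have hpos : (0 : ℤ) ≤ (Module.finrank Fq (C.L (C.divDiff η - A')) : ℤ) :=
    Int.ofNat_nonneg _
  rw [hdeg] at hrr
  push_cast at hrr
  linarith

lemma ell_mono [Nonempty C.Point] {A B : C.Point →₀ ℤ} (h : A ≤ B) :
    Module.finrank Fq (C.L A) ≤ Module.finrank Fq (C.L B) := by
  haveI := C.findim B
  exact Submodule.finrank_mono (C.L_mono h)

end Curve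

/-- Let `W` be a canonical divisor on a smooth projective curve of genus `g` over
`F_q`, and let `A`, `B`, `Z`, `D'`, `E` be divisors such that `Z`, `D'` and `E` are
effective, the supports of `A`, `B` and `Z` are disjoint from the support of `D'`,
`W = A + B + E - D'`, `ℓ(A) = ℓ(A - Z)`, and `ℓ(B) = ℓ(B + Z)`.
Then `deg E ≥ deg Z`. -/
theorem deg_E_ge_deg_Z {Fq : Type*} [Field Fq] [Fintype Fq]
    (C : Curve Fq) (W : C.Point →₀ ℤ)
    (hW : ∃ η : C.Diff, η ≠ 0 ∧ C.divDiff η = W)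
    (A B Z D' E : C.Point →₀ ℤ)
    (hZ : 0 ≤ Z) (hD' : 0 ≤ D') (hE : 0 ≤ E)
    (hAD : ∀ p : C.Point, D' p ≠ 0 → A p = 0)
    (hBD : ∀ p : C.Point, D' p ≠ 0 → B p = 0)
    (hZD : ∀ p : C.Point, D' p ≠ 0 → Z p = 0)
    (hWeq : W = A + B + E - D')
    (hA : C.ell A = C.ell (A - Z))
    (hB : C.ell B = C.ell (B + Z)) :
    divDeg Z ≤ divDeg E := by
  rcases isEmpty_or_nonempty C.Point with hemp | hne
  · have hZE : Z = E := by ext P; exact (hemp.false P).elim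
    rw [hZE]
  · obtain ⟨η, hη, hηW⟩ := hW
    have hZ' : ∀ P, 0 ≤ Z P := hZ
    have hD'' : ∀ P, 0 ≤ D' P := hD'
    have hE' : ∀ P, 0 ≤ E P := hE
    set l : (C.Point →₀ ℤ) → ℤ := fun D => (Module.finrank Fq (C.L D) : ℤ) with hl
    have lmono : ∀ {X Y : C.Point →₀ ℤ}, X ≤ Y → l X ≤ l Y :=
      fun h => Nat.cast_le.2 (C.ell_mono h)
    have rr : ∀ D : C.Point →₀ ℤ, l D = divDeg D + 1 - C.genus + l (W - D) := by
      intro D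
      have := C.riemannRoch η hη D
      rwa [hηW] at this
    -- `L (A - Z) = L A`
    have hAZle : A - Z ≤ A := by
      intro P
      simp only [Finsupp.coe_sub, Pi.sub_apply]
      linarith [hZ' P]
    have hLAZ : C.L (A - Z) = C.L A := by
      haveI := C.findim (Fq := Fq) A
      exact Submodule.eq_of_le_of_finrank_le (C.L_mono hAZle) hA.le
    -- `L (A - Z - D') = L (A - D')` by disjointness of supports
    have hADle : A - D' ≤ A := by
      intro P
      simp only [Finsupp.coe_sub, Pi.sub_apply]
      linarith [hD'' P]
    have hstar : C.L (A - Z - D') = C.L (A - D') := by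
      apply le_antisymm
      · apply C.L_mono
        intro P
        simp only [Finsupp.coe_sub, Pi.sub_apply]
        linarith [hZ' P]
      · intro f hf
        have hf2 : f ∈ C.L (A - Z) := by
          rw [hLAZ]
          exact C.L_mono hADle hf
        rcases (C.mem_L _ f).1 hf with rfl | h1
        · exact zero_mem _
        rcases (C.mem_L _ f).1 hf2 with rfl | h2
        · exact zero_mem _
        refine (C.mem_L _ f).2 (Or.inr fun P => ?_)
        by_cases hD : D' P = 0
        · have := h2 P
          simp only [Finsupp.coe_sub, Pi.sub_apply] at this ⊢
          rw [hD]
          linarith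
        · have hZP := hZD P hD
          have := h1 P
          simp only [Finsupp.coe_sub, Pi.sub_apply] at this ⊢
          rw [hZP]
          linarith
    have star' : l (A - Z - D') = l (A - D') := by
      show (Module.finrank Fq (C.L (A - Z - D')) : ℤ) = (Module.finrank Fq (C.L (A - D')) : ℤ)
      rw [hstar]
    -- Riemann–Roch bookkeeping
    have eWB : W - B = A + E - D' := by rw [hWeq]; abel
    have eWBZ : W - (B + Z) = A + E - D' - Z := by rw [hWeq]; abel
    have hBZ : l B = l (B + Z) := Nat.cast_inj.2 hB
    have h1 := rr B
    have h2 := rr (B + Z)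
    rw [eWB] at h1
    rw [eWBZ, divDeg_add] at h2
    -- key : l (A+E-D') = divDeg Z + l (A+E-D'-Z)
    have key : l (A + E - D') = divDeg Z + l (A + E - D' - Z) := by linarith
    -- mono2 : l (A - Z - D') ≤ l (A + E - D' - Z)
    have mono2 : l (A - Z - D') ≤ l (A + E - D' - Z) := by
      apply lmono
      intro P
      simp only [Finsupp.coe_sub, Finsupp.coe_add, Pi.sub_apply, Pi.add_apply]
      linarith [hE' P]
    -- ub : l (A+E-D') ≤ l (A-D') + divDeg E
    have mono1 : l (W - (A + E - D')) ≤ l (W - (A - D')) := by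
      apply lmono
      intro P
      simp only [Finsupp.coe_sub, Finsupp.coe_add, Pi.sub_apply, Pi.add_apply]
      linarith [hE' P]
    have h3 := rr (A + E - D')
    have h4 := rr (A - D')
    rw [divDeg_sub, divDeg_add] at h3
    rw [divDeg_sub] at h4
    linarith
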